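/- Let T be a transit cluster in a DAG G = (V,E). If T is not a transit component (i.e., not connected in the induced subgraph G[T]), then there exists a transit cluster S and a transit component R in G such that T = S ∪ R and S ∩ R = ∅. (Transit cluster decomposition.) -/

import Mathlib

variable {α : Type*}

/-- All edges lie within the vertex set `V`. -/
def EdgesIn (V : Set α) (E : α → α → Prop) : Prop :=
  ∀ u v, E u v → u ∈ V ∧ v ∈ V

/-- The edge relation has no directed cycles. -/
def Acyclic (E : α → α → Prop) : Prop :=
  ∀ v, ¬ Relation.TransGen E v v

/-- A finite directed acyclic graph on vertex set `V`. -/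
def IsDAG (V : Set α) (E : α → α → Prop) : Prop :=
  V.Finite ∧ EdgesIn V E ∧ Acyclic E

/-- Receivers of `T`: members of `T` with a parent outside `T`. -/
def recs (E : α → α → Prop) (T : Set α) : Set α :=
  {v | v ∈ T ∧ ∃ u, u ∉ T ∧ E u v}

/-- Emitters of `T`: members of `T` with a child outside `T`. -/
def emis (E : α → α → Prop) (T : Set α) : Set α :=
  {v | v ∈ T ∧ ∃ u, u ∉ T ∧ E v u}

/-- Edges of `G[T^=]`: the subgraph induced by `T` with incoming edges of
receivers and outgoing edges of emitters removed. -/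
def CutEdge (E : α → α → Prop) (T : Set α) (u v : α) : Prop :=
  u ∈ T ∧ v ∈ T ∧ E u v ∧ v ∉ recs E T ∧ u ∉ emis E T

/-- Undirected reachability with respect to an edge relation. -/
def UndirReach (E : α → α → Prop) (u v : α) : Prop :=
  Relation.ReflTransGen (fun a b => E a b ∨ E b a) u v

/-- `T` is a transit cluster in the graph `(V, E)`. -/
def IsTransitCluster (V : Set α) (E : α → α → Prop) (T : Set α) : Prop :=
  T.Nonempty ∧ T ⊂ V ∧
  (∀ r₁ ∈ recs E T, ∀ r₂ ∈ recs E T,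
    {u | u ∉ T ∧ E u r₁} = {u | u ∉ T ∧ E u r₂}) ∧
  (∀ e₁ ∈ emis E T, ∀ e₂ ∈ emis E T,
    {u | u ∉ T ∧ E e₁ u} = {u | u ∉ T ∧ E e₂ u}) ∧
  (∀ x ∈ T, ∃ w, (w ∈ recs E T ∨ w ∈ emis E T) ∧ UndirReach (CutEdge E T) x w) ∧
  ((emis E T).Nonempty → ∀ r ∈ recs E T, ∃ e ∈ emis E T, Relation.ReflTransGen E r e) ∧
  ((recs E T).Nonempty → ∀ e ∈ emis E T, ∃ r ∈ recs E T, Relation.ReflTransGen E r e)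

/-- Vertex set of the graph obtained by clustering `T` into the new vertex `t`. -/
def ClusterVerts (V T : Set α) (t : α) : Set α := (V \ T) ∪ {t}

/-- Edge relation of the graph obtained by clustering `T` into the new vertex `t`:
edges not touching `T` are kept, the parents of `t` are the external parents of
`recs T`, and the children of `t` are the external children of `emis T`. -/
def ClusterEdge (E : α → α → Prop) (T : Set α) (t : α) (u v : α) : Prop :=
  (u ∉ T ∧ v ∉ T ∧ E u v) ∨
  (u ∉ T ∧ u ≠ t ∧ v = t ∧ ∃ r ∈ recs E T, E u r) ∨
  (u = t ∧ v ∉ T ∧ v ≠ t ∧ ∃ e ∈ emis E T, E e v)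

/-- A transit component: a transit cluster that is connected (undirectedly)
in the subgraph it induces. -/
def IsTransitComponent (V : Set α) (E : α → α → Prop) (T : Set α) : Prop :=
  IsTransitCluster V E T ∧
  ∀ u ∈ T, ∀ v ∈ T, UndirReach (fun a b => a ∈ T ∧ b ∈ T ∧ E a b) u v

section Aux

variable {V : Set α} {E : α → α → Prop} {T A : Set α}

lemma recs_eq_aux (hsub : A ⊆ T)
    (hclosed : ∀ u v, E u v → u ∈ T → v ∈ T → (u ∈ A ↔ v ∈ A)) :
    recs E A = recs E T ∩ A := by
  ext v
  constructor
  · rintro ⟨hvA, u, huA, huv⟩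
    refine ⟨⟨hsub hvA, u, ?_, huv⟩, hvA⟩
    intro huT
    exact huA ((hclosed u v huv huT (hsub hvA)).2 hvA)
  · rintro ⟨⟨hvT, u, huT, huv⟩, hvA⟩
    exact ⟨hvA, u, fun h => huT (hsub h), huv⟩

lemma emis_eq_aux (hsub : A ⊆ T)
    (hclosed : ∀ u v, E u v → u ∈ T → v ∈ T → (u ∈ A ↔ v ∈ A)) :
    emis E A = emis E T ∩ A := by
  ext v
  constructor
  · rintro ⟨hvA, u, huA, huv⟩
    refine ⟨⟨hsub hvA, u, ?_, huv⟩, hvA⟩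
    intro huT
    exact huA ((hclosed v u huv (hsub hvA) huT).1 hvA)
  · rintro ⟨⟨hvT, u, huT, huv⟩, hvA⟩
    exact ⟨hvA, u, fun h => huT (hsub h), huv⟩

lemma exit_emitter {a b : α} (h : Relation.ReflTransGen E a b)
    (ha : a ∈ A) (hb : b ∉ A) :
    ∃ m ∈ emis E A, Relation.ReflTransGen E a m := by
  revert ha
  induction h using Relation.ReflTransGen.head_induction_on with
  | refl => exact fun ha => absurd ha hb
  | head e h ih =>
    rename_i x c
    intro ha
    by_cases hc : c ∈ A
    · obtain ⟨m, hm, hp⟩ := ih hc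
      exact ⟨m, hm, Relation.ReflTransGen.head e hp⟩
    · exact ⟨x, ⟨ha, c, hc, e⟩, Relation.ReflTransGen.refl⟩

lemma enter_receiver {a b : α} (h : Relation.ReflTransGen E a b)
    (ha : a ∉ A) (hb : b ∈ A) :
    ∃ m ∈ recs E A, Relation.ReflTransGen E m b := by
  induction h with
  | refl => exact absurd hb ha
  | tail h' e ih =>
    rename_i c d
    by_cases hc : c ∈ A
    · obtain ⟨m, hm, hp⟩ := ih hc
      exact ⟨m, hm, hp.tail e⟩
    · exact ⟨d, ⟨hb, c, hc, e⟩, Relation.ReflTransGen.refl⟩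

lemma cutreach_stays {a b : α} (hsub : A ⊆ T)
    (hclosed : ∀ u v, E u v → u ∈ T → v ∈ T → (u ∈ A ↔ v ∈ A))
    (h : UndirReach (CutEdge E T) a b) (ha : a ∈ A) :
    b ∈ A ∧ UndirReach (CutEdge E A) a b := by
  have hrA := recs_eq_aux hsub hclosed
  have heA := emis_eq_aux hsub hclosed
  induction h with
  | refl => exact ⟨ha, Relation.ReflTransGen.refl⟩
  | tail h' e ih =>
    rename_i c d
    obtain ⟨hcA, hp⟩ := ih
    rcases e with ⟨hcT, hdT, hE, hdr, hce⟩ | ⟨hdT, hcT, hE, hcr, hde⟩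
    · have hdA : d ∈ A := (hclosed c d hE hcT hdT).1 hcA
      have : CutEdge E A c d :=
        ⟨hcA, hdA, hE, fun h => hdr (hrA ▸ h).1, fun h => hce (heA ▸ h).1⟩
      exact ⟨hdA, hp.tail (Or.inl this)⟩
    · have hdA : d ∈ A := (hclosed d c hE hdT hcT).2 hcA
      have : CutEdge E A d c :=
        ⟨hdA, hcA, hE, fun h => hcr (hrA ▸ h).1, fun h => hde (heA ▸ h).1⟩
      exact ⟨hdA, hp.tail (Or.inr this)⟩

lemma cluster_of_closed (hT : IsTransitCluster V E T) (hsub : A ⊆ T)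
    (hne : A.Nonempty)
    (hclosed : ∀ u v, E u v → u ∈ T → v ∈ T → (u ∈ A ↔ v ∈ A)) :
    IsTransitCluster V E A := by
  obtain ⟨hTne, hTV, hrecs, hemis, hcon, hre, her⟩ := hT
  have hrA := recs_eq_aux hsub hclosed
  have heA := emis_eq_aux hsub hclosed
  have hparents : ∀ r, r ∈ A → r ∈ recs E A →
      {u | u ∉ A ∧ E u r} = {u | u ∉ T ∧ E u r} := by
    intro r hrAmem _
    ext u
    constructor
    · rintro ⟨huA, hE⟩
      refine ⟨fun huT => huA ((hclosed u r hE huT (hsub hrAmem)).2 hrAmem), hE⟩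
    · rintro ⟨huT, hE⟩
      exact ⟨fun h => huT (hsub h), hE⟩
  have hchildren : ∀ e, e ∈ A →
      {u | u ∉ A ∧ E e u} = {u | u ∉ T ∧ E e u} := by
    intro e heAmem
    ext u
    constructor
    · rintro ⟨huA, hE⟩
      refine ⟨fun huT => huA ((hclosed e u hE (hsub heAmem) huT).1 heAmem), hE⟩
    · rintro ⟨huT, hE⟩
      exact ⟨fun h => huT (hsub h), hE⟩
  refine ⟨hne, ⟨hsub.trans hTV.1, fun h => hTV.2 (h.trans hsub)⟩, ?_, ?_, ?_, ?_, ?_⟩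
  · intro r₁ hr₁ r₂ hr₂
    have h₁ := (hrA ▸ hr₁ : r₁ ∈ recs E T ∩ A)
    have h₂ := (hrA ▸ hr₂ : r₂ ∈ recs E T ∩ A)
    rw [hparents r₁ h₁.2 hr₁, hparents r₂ h₂.2 hr₂]
    exact hrecs r₁ h₁.1 r₂ h₂.1
  · intro e₁ he₁ e₂ he₂
    have h₁ := (heA ▸ he₁ : e₁ ∈ emis E T ∩ A)
    have h₂ := (heA ▸ he₂ : e₂ ∈ emis E T ∩ A)
    rw [hchildren e₁ h₁.2, hchildren e₂ h₂.2]
    exact hemis e₁ h₁.1 e₂ h₂.1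
  · intro x hx
    obtain ⟨w, hw, hpath⟩ := hcon x (hsub hx)
    obtain ⟨hwA, hp⟩ := cutreach_stays hsub hclosed hpath hx
    refine ⟨w, ?_, hp⟩
    rcases hw with hw | hw
    · exact Or.inl (hrA ▸ (⟨hw, hwA⟩ : w ∈ recs E T ∩ A))
    · exact Or.inr (heA ▸ (⟨hw, hwA⟩ : w ∈ emis E T ∩ A))
  · rintro ⟨e₀, he₀⟩ r hr
    have he₀T := (heA ▸ he₀ : e₀ ∈ emis E T ∩ A)
    have hrT := (hrA ▸ hr : r ∈ recs E T ∩ A)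
    obtain ⟨e, heT, hp⟩ := hre ⟨e₀, he₀T.1⟩ r hrT.1
    by_cases heAmem : e ∈ A
    · exact ⟨e, heA ▸ (⟨heT, heAmem⟩ : e ∈ emis E T ∩ A), hp⟩
    · obtain ⟨m, hm, hq⟩ := exit_emitter hp hrT.2 heAmem
      exact ⟨m, hm, hq⟩
  · rintro ⟨r₀, hr₀⟩ e he
    have hr₀T := (hrA ▸ hr₀ : r₀ ∈ recs E T ∩ A)
    have heT := (heA ▸ he : e ∈ emis E T ∩ A)
    obtain ⟨r, hrT, hp⟩ := her ⟨r₀, hr₀T.1⟩ e heT.1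
    by_cases hrAmem : r ∈ A
    · exact ⟨r, hrA ▸ (⟨hrT, hrAmem⟩ : r ∈ recs E T ∩ A), hp⟩
    · obtain ⟨m, hm, hq⟩ := enter_receiver hp hrAmem heT.2
      exact ⟨m, hm, hq⟩

end Aux

/-- transit cluster decomposition. -/
theorem transit_cluster_decomposition
    (V : Set α) (E : α → α → Prop) (T : Set α)
    (hdag : IsDAG V E)
    (hT : IsTransitCluster V E T)
    (hnc : ¬ IsTransitComponent V E T) :
    ∃ S R : Set α, IsTransitCluster V E S ∧ IsTransitComponent V E R ∧
      T = S ∪ R ∧ S ∩ R = ∅ := by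
  classical
  have hncon : ∃ u ∈ T, ∃ v ∈ T,
      ¬ UndirReach (fun a b => a ∈ T ∧ b ∈ T ∧ E a b) u v := by
    by_contra h
    push_neg at h
    exact hnc ⟨hT, h⟩
  obtain ⟨u, huT, v, hvT, huv⟩ := hncon
  set Ted : α → α → Prop := fun a b => a ∈ T ∧ b ∈ T ∧ E a b with hTed
  set R : Set α := {y | y ∈ T ∧ UndirReach Ted u y} with hRdef
  have hRsub : R ⊆ T := fun y hy => hy.1
  have symTed : Symmetric (fun a b => Ted a b ∨ Ted b a) := by
    intro a b h; tauto
  have hclosedR : ∀ a b, E a b → a ∈ T → b ∈ T → (a ∈ R ↔ b ∈ R) := by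
    intro a b hE haT hbT
    constructor
    · rintro ⟨_, hp⟩
      exact ⟨hbT, hp.tail (Or.inl ⟨haT, hbT, hE⟩)⟩
    · rintro ⟨_, hp⟩
      exact ⟨haT, hp.tail (Or.inr ⟨haT, hbT, hE⟩)⟩
  have huR : u ∈ R := ⟨huT, Relation.ReflTransGen.refl⟩
  have hvR : v ∉ R := fun h => huv h.2
  set S : Set α := T \ R with hSdef
  have hSsub : S ⊆ T := Set.diff_subset
  have hclosedS : ∀ a b, E a b → a ∈ T → b ∈ T → (a ∈ S ↔ b ∈ S) := by
    intro a b hE haT hbT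
    have := hclosedR a b hE haT hbT
    simp only [hSdef, Set.mem_diff]
    tauto
  have hRclust := cluster_of_closed hT hRsub ⟨u, huR⟩ hclosedR
  have hSclust := cluster_of_closed hT hSsub ⟨v, hvT, hvR⟩ hclosedS
  -- connectivity of R
  have hstay : ∀ y, UndirReach Ted u y → y ∈ R ∧
      UndirReach (fun a b => a ∈ R ∧ b ∈ R ∧ E a b) u y := by
    intro y hy
    induction hy with
    | refl => exact ⟨huR, Relation.ReflTransGen.refl⟩
    | tail h' e ih =>
      rename_i c d
      obtain ⟨hcR, hp⟩ := ih
      rcases e with ⟨hcT, hdT, hE⟩ | ⟨hdT, hcT, hE⟩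
      · have hdR : d ∈ R := (hclosedR c d hE hcT hdT).1 hcR
        exact ⟨hdR, hp.tail (Or.inl ⟨hcR, hdR, hE⟩)⟩
      · have hdR : d ∈ R := (hclosedR d c hE hdT hcT).2 hcR
        exact ⟨hdR, hp.tail (Or.inr ⟨hdR, hcR, hE⟩)⟩
  have hRcomp : IsTransitComponent V E R := by
    refine ⟨hRclust, ?_⟩
    intro x hx y hy
    have symR : Symmetric (fun a b =>
        (a ∈ R ∧ b ∈ R ∧ E a b) ∨ (b ∈ R ∧ a ∈ R ∧ E b a)) := by
      intro a b h; tauto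
    have hux := (hstay x hx.2).2
    have huy := (hstay y hy.2).2
    exact Relation.ReflTransGen.trans
      ((@Relation.ReflTransGen.symmetric _ _ ⟨symR⟩).symm _ _ hux) huy
  refine ⟨S, R, hSclust, hRcomp, ?_, ?_⟩
  · rw [hSdef, Set.diff_union_of_subset hRsub]
  · rw [hSdef]
    ext x
    simp only [Set.mem_inter_iff, Set.mem_diff, Set.mem_empty_iff_false, iff_false]
    tauto
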